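/- A density matrix τ : Matrix (Fin 2) (Fin 2) ℂ (i.e. τ.PosSemidef and τ.trace = 1) satisfies the fixed-point equation τ 0 0 = τ 1 1, τ 1 1 = τ 0 0, τ 0 1 = 0 and τ 1 0 = 0 (that is, τ = !![τ 1 1, 0; 0, τ 0 0]) if and only if τ = (2 : ℂ)⁻¹ • 1. In other words, the maximally mixed state is the unique solution of Deutsch's consistency condition for the grandfather's paradox circuit. -/
import Mathlib


open scoped ComplexOrder

/-- The maximally mixed state is the unique density-matrix solution of Deutsch's
consistency condition for the grandfather's paradox circuit:
`τ = !![τ 1 1, 0; 0, τ 0 0]`. -/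
theorem grandfather_paradox_unique_fixed_point
    (τ : Matrix (Fin 2) (Fin 2) ℂ) (hpsd : τ.PosSemidef) (htr : τ.trace = 1) :
    (τ 0 0 = τ 1 1 ∧ τ 1 1 = τ 0 0 ∧ τ 0 1 = 0 ∧ τ 1 0 = 0) ↔
      τ = (2 : ℂ)⁻¹ • (1 : Matrix (Fin 2) (Fin 2) ℂ) := by
  have htr' : τ 0 0 + τ 1 1 = 1 := by
    simpa [Matrix.trace, Fin.sum_univ_two] using htr
  constructor
  · rintro ⟨h1, -, h3, h4⟩
    have h00 : τ 0 0 = 2⁻¹ := by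
      rw [h1] at htr'
      field_simp at htr' ⊢
      linear_combination htr' + 2 * h1
    have h11 : τ 1 1 = 2⁻¹ := h1 ▸ h00
    ext i j
    fin_cases i <;> fin_cases j <;>
      simp [h00, h11, h3, h4, Matrix.one_apply]
  · rintro rfl
    norm_num [Matrix.one_apply]
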